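/- arXiv:1311.2361 — 2 statements merged into one kernel-verified Lean document; each statement's English description precedes it below -/
import Mathlib

section
/- Let n be a positive integer and j, k nonnegative integers with j = k ≤ n − 1. Then there exists an n-by-n complex matrix A with p(A) = j and a(A) = k. -/
open Matrix

noncomputable section

/-- An `ι`-by-`ι` complex matrix `A` is a *partial isometry* if `‖Ax‖ = ‖x‖` for every
vector `x` in the orthogonal complement of `ker A` (Euclidean structure). -/
def Matrix.IsPartialIsometry {ι : Type*} [Fintype ι] [DecidableEq ι]
    (A : Matrix ι ι ℂ) : Prop :=
  ∀ x ∈ (LinearMap.ker (Matrix.toEuclideanLin A))ᗮ, ‖Matrix.toEuclideanLin A x‖ = ‖x‖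

/-- The *power partial isometry index* `p(A)`: the supremum (in `ℕ∞`, possibly `⊤`) of the
nonnegative integers `j` such that `I, A, A², …, A^j` are all partial isometries. -/
def Matrix.pIndex {ι : Type*} [Fintype ι] [DecidableEq ι] (A : Matrix ι ι ℂ) : ℕ∞ :=
  sSup ((↑) '' {j : ℕ | ∀ i ≤ j, (A ^ i).IsPartialIsometry})

/-- The *ascent* `a(A)`: the smallest nonnegative integer `k` with `ker A^k = ker A^(k+1)`. -/
def Matrix.ascent {ι : Type*} [Fintype ι] [DecidableEq ι] (A : Matrix ι ι ℂ) : ℕ :=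
  sInf {k : ℕ | LinearMap.ker (Matrix.toEuclideanLin (A ^ k)) =
    LinearMap.ker (Matrix.toEuclideanLin (A ^ (k + 1)))}

/-- `A` is unitarily similar to `B` (allowing different, necessarily equipotent, index types):
`B = U* A U` for some unitary `U`. -/
def Matrix.UnitarilySimilarTo {ι κ : Type*} [Fintype ι] [Fintype κ] [DecidableEq ι]
    [DecidableEq κ] (A : Matrix ι ι ℂ) (B : Matrix κ κ ℂ) : Prop :=
  ∃ U : Matrix ι κ ℂ, Uᴴ * U = 1 ∧ U * Uᴴ = 1 ∧ B = Uᴴ * A * U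

/-- The `q`-by-`q` nilpotent Jordan block `J_q`. -/
def JordanBlock (q : ℕ) : Matrix (Fin q) (Fin q) ℂ :=
  Matrix.of fun a b => if (b : ℕ) = (a : ℕ) + 1 then 1 else 0

/-- `A` is of class `S_n`: a contraction whose eigenvalues all have moduli strictly
less than `1` and with `rank (1 - A*A) = 1`. -/
def Matrix.IsClassSn {n : ℕ} (A : Matrix (Fin n) (Fin n) ℂ) : Prop :=
  (∀ x : EuclideanSpace ℂ (Fin n), ‖Matrix.toEuclideanLin A x‖ ≤ ‖x‖) ∧
  (∀ z ∈ spectrum ℂ A, ‖z‖ < 1) ∧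
  (1 - Aᴴ * A).rank = 1


variable {ι : Type*} [Fintype ι] [DecidableEq ι]

lemma toE_mul (A B : Matrix ι ι ℂ) :
    Matrix.toEuclideanLin (A * B) =
      (Matrix.toEuclideanLin A) ∘ₗ (Matrix.toEuclideanLin B) := by
  ext x
  simp [Matrix.toEuclideanLin_apply, Matrix.mulVec_mulVec]

lemma adjoint_apply_mem_perp (T : EuclideanSpace ℂ ι →ₗ[ℂ] EuclideanSpace ℂ ι)
    (u : EuclideanSpace ℂ ι) : (LinearMap.adjoint T) u ∈ (LinearMap.ker T)ᗮ := by
  rw [Submodule.mem_orthogonal]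
  intro z hz
  rw [LinearMap.mem_ker] at hz
  rw [LinearMap.adjoint_inner_right, hz, inner_zero_left]

/-- If `B Bᴴ B = B` then `B` is a partial isometry. -/
lemma isPartialIsometry_of_conjTranspose (B : Matrix ι ι ℂ) (h : B * Bᴴ * B = B) :
    B.IsPartialIsometry := by
  intro x hx
  set T := Matrix.toEuclideanLin B with hT
  have hTT : T ∘ₗ (LinearMap.adjoint T) ∘ₗ T = T := by
    rw [hT, ← Matrix.toEuclideanLin_conjTranspose_eq_adjoint, ← toE_mul, ← toE_mul,
      ← Matrix.mul_assoc, h]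
  -- show (adjoint T) (T x) = x
  have key : (LinearMap.adjoint T) (T x) = x := by
    set y := (LinearMap.adjoint T) (T x) - x with hy
    have h1 : T y = 0 := by
      have := congrFun (congrArg DFunLike.coe hTT) x
      simp only [LinearMap.comp_apply] at this
      simp [hy, map_sub, this]
    have h2 : y ∈ (LinearMap.ker T)ᗮ :=
      Submodule.sub_mem _ (adjoint_apply_mem_perp T (T x)) hx
    have h3 : y ∈ LinearMap.ker T := LinearMap.mem_ker.mpr h1
    have : y = 0 := by
      have := (Submodule.inf_orthogonal_eq_bot (LinearMap.ker T))
      have hmem : y ∈ (⊥ : Submodule ℂ (EuclideanSpace ℂ ι)) := by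
        rw [← this]; exact ⟨h3, h2⟩
      simpa using hmem
    rw [hy] at this
    linear_combination (norm := module) this
  have hinner : (inner ℂ (T x) (T x) : ℂ) = inner ℂ x x := by
    rw [← LinearMap.adjoint_inner_left, key]
  have := congrArg Complex.re hinner
  rw [inner_self_eq_norm_sq_to_K, inner_self_eq_norm_sq_to_K] at hinner
  have h0 : ‖T x‖ ^ 2 = ‖x‖ ^ 2 := by exact_mod_cast hinner
  nlinarith [norm_nonneg (T x), norm_nonneg x]

/-- If `B` is a nonzero "matrix partial isometry" and `0 < ‖c‖ < 1`, `c • B` is not a PI. -/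
lemma not_isPartialIsometry_smul (B : Matrix ι ι ℂ) (hB : B * Bᴴ * B = B) (hB0 : B ≠ 0)
    (c : ℂ) (hc0 : c ≠ 0) (hc1 : ‖c‖ ≠ 1) : ¬ (c • B).IsPartialIsometry := by
  intro hPI
  set T := Matrix.toEuclideanLin B with hT
  have hsmul : Matrix.toEuclideanLin (c • B) = c • T := by rw [hT, _root_.map_smul]
  have hker : LinearMap.ker (Matrix.toEuclideanLin (c • B)) = LinearMap.ker T := by
    rw [hsmul]; exact LinearMap.ker_smul _ _ hc0
  -- find u with adjoint T u ≠ 0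
  have hTne : T ≠ 0 := by
    intro h0
    apply hB0
    have : Matrix.toEuclideanLin B = Matrix.toEuclideanLin 0 := by simp [← hT, h0]
    exact Matrix.toEuclideanLin.injective this
  have hadj : LinearMap.adjoint T ≠ 0 := by
    intro h0
    apply hTne
    have := congrArg LinearMap.adjoint h0
    rwa [LinearMap.adjoint_adjoint, map_zero] at this
  obtain ⟨u, hu⟩ : ∃ u, (LinearMap.adjoint T) u ≠ 0 := by
    by_contra hcon
    push_neg at hcon
    exact hadj (by ext v; simp [hcon v])
  set x := (LinearMap.adjoint T) u with hx
  have hxperp : x ∈ (LinearMap.ker (Matrix.toEuclideanLin (c • B)))ᗮ := by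
    rw [hker]; exact adjoint_apply_mem_perp T u
  have hnorm := hPI x hxperp
  have hBpi := isPartialIsometry_of_conjTranspose B hB
  have hTx : ‖T x‖ = ‖x‖ := hBpi x (adjoint_apply_mem_perp T u)
  rw [hsmul] at hnorm
  simp only [LinearMap.smul_apply, norm_smul] at hnorm
  rw [hTx] at hnorm
  have hxne : ‖x‖ ≠ 0 := by simpa using hu
  have : ‖c‖ = 1 := by
    have h1 : ‖c‖ * ‖x‖ = 1 * ‖x‖ := by rw [one_mul]; exact hnorm
    exact mul_right_cancel₀ hxne h1
  exact hc1 this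



section VMV
variable {R : Type*} [CommRing R] {ι : Type*} [Fintype ι] [DecidableEq ι]

lemma mul_vecMulVec (M : Matrix ι ι R) (u v : ι → R) :
    M * vecMulVec u v = vecMulVec (M.mulVec u) v := by
  ext x y
  simp only [Matrix.mul_apply, vecMulVec_apply, Matrix.mulVec, dotProduct,
    Finset.sum_mul]
  exact Finset.sum_congr rfl fun z _ => by ring

lemma vecMulVec_mul (u v : ι → R) (M : Matrix ι ι R) :
    vecMulVec u v * M = vecMulVec u (Matrix.vecMul v M) := by
  ext x y
  simp only [Matrix.mul_apply, vecMulVec_apply, Matrix.vecMul, dotProduct,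
    Finset.mul_sum]
  exact Finset.sum_congr rfl fun z _ => by ring

lemma vecMulVec_mul_vecMulVec (u v p q : ι → R) :
    vecMulVec u v * vecMulVec p q = (v ⬝ᵥ p) • vecMulVec u q := by
  rw [_root_.vecMulVec_mul]
  ext x y
  simp only [vecMulVec_apply, Matrix.vecMul, dotProduct, Matrix.smul_apply,
    vecMulVec_apply, smul_eq_mul, Finset.sum_mul, Finset.mul_sum]
  exact Finset.sum_congr rfl fun z _ => by ring

lemma vecMulVec_smul_right (u : ι → R) (c : R) (v : ι → R) :
    vecMulVec u (c • v) = c • vecMulVec u v := by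
  ext x y; simp [vecMulVec_apply, mul_comm, mul_left_comm]

lemma vecMulVec_zero_left (v : ι → R) : vecMulVec (0 : ι → R) v = 0 := by
  ext x y; simp [vecMulVec_apply]

lemma vecMulVec_zero_right (u : ι → R) : vecMulVec u (0 : ι → R) = 0 := by
  ext x y; simp [vecMulVec_apply]

end VMV

lemma conjTranspose_vecMulVec {ι : Type*} [Fintype ι] (u v : ι → ℂ) :
    (vecMulVec u v)ᴴ = vecMulVec (star v) (star u) := by
  ext x y
  simp [vecMulVec_apply, Matrix.conjTranspose_apply, mul_comm]

/-- Abstract lemma: `B = E + e wᵀ` is a matrix partial isometry. -/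
lemma abstract_pi {ι : Type*} [Fintype ι] [DecidableEq ι]
    (E : Matrix ι ι ℂ) (e w : ι → ℂ)
    (hE : E * Eᴴ * E = E)
    (hEw : E.mulVec w = 0)
    (hwE : Matrix.vecMul w Eᴴ = 0)
    (heE : Matrix.vecMul e E = 0)
    (hEe : Eᴴ.mulVec e = 0)
    (hww : w ⬝ᵥ w = 1)
    (hee : e ⬝ᵥ e = 1)
    (hsw : star w = w) (hse : star e = e) :
    (E + vecMulVec e w) * (E + vecMulVec e w)ᴴ * (E + vecMulVec e w)
      = E + vecMulVec e w := by
  set B := E + vecMulVec e w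
  have hVH : (vecMulVec e w)ᴴ = vecMulVec w e := by
    rw [_root_.conjTranspose_vecMulVec, hsw, hse]
  have step1 : B * Bᴴ = E * Eᴴ + vecMulVec e e := by
    show (E + vecMulVec e w) * (E + vecMulVec e w)ᴴ = _
    rw [Matrix.conjTranspose_add, hVH, Matrix.add_mul, Matrix.mul_add, Matrix.mul_add]
    rw [_root_.mul_vecMulVec, hEw, _root_.vecMulVec_zero_left, _root_.vecMulVec_mul, hwE, _root_.vecMulVec_zero_right,
      _root_.vecMulVec_mul_vecMulVec, hww, one_smul]
    abel
  rw [step1, Matrix.add_mul]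
  show E * Eᴴ * (E + vecMulVec e w) + vecMulVec e e * (E + vecMulVec e w) = _
  rw [Matrix.mul_add, Matrix.mul_add, Matrix.mul_assoc, ← Matrix.mul_assoc E Eᴴ E, hE]
  rw [_root_.mul_vecMulVec, ← Matrix.mulVec_mulVec, hEe, Matrix.mulVec_zero, _root_.vecMulVec_zero_left,
    _root_.vecMulVec_mul, heE, _root_.vecMulVec_zero_right, _root_.vecMulVec_mul_vecMulVec, hee, one_smul]
  show E + 0 + (0 + vecMulVec e w) = B
  simp [B]

/-! ### Concrete construction -/

noncomputable def cc : ℂ := ((1/2 : ℝ) : ℂ)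
noncomputable def aa : ℂ := ((Real.sqrt 3 / 2 : ℝ) : ℂ)

lemma star_cc : star cc = cc := by simp [cc, Complex.conj_ofReal]
lemma star_aa : star aa = aa := by simp [aa, Complex.conj_ofReal]
lemma cc_ne_zero : cc ≠ 0 := by norm_num [cc]
lemma norm_cc : ‖cc‖ = 1/2 := by rw [cc, Complex.norm_real]; norm_num
lemma aa_sq_add_cc_sq : aa^2 + cc^2 = 1 := by
  rw [aa, cc, ← Complex.ofReal_pow, ← Complex.ofReal_pow]
  norm_cast
  rw [div_pow, Real.sq_sqrt (by norm_num : (3:ℝ) ≥ 0)]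
  norm_num

def dl (n t : ℕ) : Fin n → ℂ := fun z => if (z : ℕ) = t then 1 else 0

noncomputable def Wv (n k i : ℕ) : Fin n → ℂ := fun z =>
  if (z : ℕ) < k ∧ k ≤ (z : ℕ) + i then aa * cc ^ ((z : ℕ) + i - k)
  else if (z : ℕ) = k then cc ^ i else 0

def Em (n k i : ℕ) : Matrix (Fin n) (Fin n) ℂ :=
  of fun x y => if (x : ℕ) < k ∧ (x : ℕ) = (y : ℕ) + i then 1 else 0

noncomputable def Mm (n k i : ℕ) : Matrix (Fin n) (Fin n) ℂ := Em n k i + vecMulVec (dl n k) (Wv n k i)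

lemma star_dl (n t : ℕ) : star (dl n t) = dl n t := by
  funext z
  simp only [Pi.star_apply, dl]
  split_ifs <;> simp

lemma star_Wv (n k i : ℕ) : star (Wv n k i) = Wv n k i := by
  funext z
  simp only [Pi.star_apply, Wv]
  split_ifs
  · rw [star_mul', star_pow, star_aa, star_cc]
  · rw [star_pow, star_cc]
  · exact star_zero _

lemma dl_dot {n : ℕ} (t : ℕ) (ht : t < n) (f : Fin n → ℂ) :
    dl n t ⬝ᵥ f = f ⟨t, ht⟩ := by
  rw [dotProduct]
  rw [Finset.sum_eq_single (⟨t, ht⟩ : Fin n)]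
  · simp [dl]
  · intro z _ hz
    have : (z : ℕ) ≠ t := fun h => hz (Fin.ext h)
    simp [dl, this]
  · simp

lemma dot_dl {n : ℕ} (t : ℕ) (ht : t < n) (f : Fin n → ℂ) :
    f ⬝ᵥ dl n t = f ⟨t, ht⟩ := by
  rw [dotProduct]
  rw [Finset.sum_eq_single (⟨t, ht⟩ : Fin n)]
  · simp [dl]
  · intro z _ hz
    have : (z : ℕ) ≠ t := fun h => hz (Fin.ext h)
    simp [dl, this]
  · simp

lemma Wv_zero (n k : ℕ) : Wv n k 0 = dl n k := by
  funext z
  simp only [Wv, dl]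
  split_ifs with h1 h2 <;> first | rfl | omega | simp

lemma Wv_succ (n k i : ℕ) :
    Wv n k (i+1) = (fun y : Fin n => if (y : ℕ) + i + 1 = k then aa else 0) + cc • Wv n k i := by
  funext z
  simp only [Wv, Pi.add_apply, Pi.smul_apply, smul_eq_mul]
  by_cases h1 : (z : ℕ) + i + 1 = k
  · have hz : (z : ℕ) < k := by omega
    have h2 : k ≤ (z : ℕ) + (i+1) := by omega
    have h3 : ¬ ((z:ℕ) < k ∧ k ≤ (z:ℕ) + i) := by omega
    have h4 : (z : ℕ) + (i+1) - k = 0 := by omega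
    rw [if_pos ⟨hz, h2⟩, if_pos h1, if_neg h3, if_neg (by omega : ¬ (z:ℕ) = k), h4]
    ring
  · rw [if_neg h1]
    by_cases h2 : (z : ℕ) < k ∧ k ≤ (z : ℕ) + i
    · have h3 : (z:ℕ) < k ∧ k ≤ (z:ℕ) + (i+1) := by omega
      rw [if_pos h3, if_pos h2]
      have h4 : (z : ℕ) + (i+1) - k = ((z:ℕ) + i - k) + 1 := by omega
      rw [h4, pow_succ]
      ring
    · by_cases h3 : (z : ℕ) = k
      · have h4 : ¬ ((z:ℕ) < k ∧ k ≤ (z:ℕ) + (i+1)) := by omega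
        rw [if_neg h4, if_pos h3, if_neg (by omega : ¬((z:ℕ) < k ∧ k ≤ (z:ℕ) + i)), if_pos h3,
          pow_succ]
        ring
      · have h4 : ¬ ((z:ℕ) < k ∧ k ≤ (z:ℕ) + (i+1)) := by omega
        rw [if_neg h4, if_neg h3, if_neg (by
          intro hc
          exact h1 (by omega)), if_neg h3]
        ring

lemma d_eq (n k i : ℕ) (h : i < k) :
    (fun y : Fin n => if (y : ℕ) + i + 1 = k then aa else 0) = aa • dl n (k-1-i) := by
  funext z
  simp only [Pi.smul_apply, dl, smul_eq_mul]
  by_cases h1 : (z : ℕ) + i + 1 = k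
  · rw [if_pos h1, if_pos (by omega), mul_one]
  · rw [if_neg h1, if_neg (by omega), mul_zero]

lemma d_eq_zero (n k i : ℕ) (h : k ≤ i) :
    (fun y : Fin n => if (y : ℕ) + i + 1 = k then aa else 0) = 0 := by
  funext z
  simp only [Pi.zero_apply]
  rw [if_neg (by omega)]

lemma Sw (n k : ℕ) (hkn : k < n) : ∀ i ≤ k, Wv n k i ⬝ᵥ Wv n k i = 1 := by
  intro i
  induction i with
  | zero =>
    intro _
    rw [Wv_zero, dl_dot k hkn]
    simp [dl]
  | succ i ih =>
    intro hik
    have hi : i < k := by omega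
    rw [Wv_succ, d_eq n k i hi]
    set w := Wv n k i
    set d := dl n (k-1-i)
    have h1 : k - 1 - i < n := by omega
    have hdd : d ⬝ᵥ d = 1 := by rw [dl_dot _ h1]; simp [d, dl]
    have hwd : w ⬝ᵥ d = 0 := by
      rw [dot_dl _ h1]
      simp only [w, Wv]
      rw [if_neg (by omega), if_neg (by omega)]
    have hdw : d ⬝ᵥ w = 0 := by
      rw [dl_dot _ h1]
      simp only [w, Wv]
      rw [if_neg (by omega), if_neg (by omega)]
    have hww : w ⬝ᵥ w = 1 := ih (by omega)
    simp only [add_dotProduct, dotProduct_add, smul_dotProduct,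
      dotProduct_smul, hdd, hwd, hdw, hww, smul_eq_mul, mul_one, mul_zero,
      add_zero, zero_add]
    linear_combination aa_sq_add_cc_sq

lemma Em_apply (n k i : ℕ) (x y : Fin n) :
    Em n k i x y = if (x : ℕ) < k ∧ (x : ℕ) = (y : ℕ) + i then 1 else 0 := rfl

lemma EmH_apply (n k i : ℕ) (x y : Fin n) :
    (Em n k i)ᴴ x y = if (y : ℕ) < k ∧ (y : ℕ) = (x : ℕ) + i then 1 else 0 := by
  rw [Matrix.conjTranspose_apply, Em_apply]
  split_ifs <;> simp

lemma EmEmH (n k i : ℕ) :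
    Em n k i * (Em n k i)ᴴ =
      of fun x t : Fin n => if (x : ℕ) = (t : ℕ) ∧ (x : ℕ) < k ∧ i ≤ (x : ℕ) then (1:ℂ) else 0 := by
  ext x t
  rw [Matrix.mul_apply]
  simp only [EmH_apply, Em_apply, of_apply]
  by_cases h : (x : ℕ) = (t : ℕ) ∧ (x : ℕ) < k ∧ i ≤ (x : ℕ)
  · rw [if_pos h]
    obtain ⟨hxt, hxk, hix⟩ := h
    have hz : (x : ℕ) - i < n := by omega
    rw [Finset.sum_eq_single (⟨(x : ℕ) - i, hz⟩ : Fin n)]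
    · rw [if_pos ⟨hxk, by simp only [Fin.val_mk]; omega⟩,
        if_pos ⟨by omega, by simp only [Fin.val_mk]; omega⟩, mul_one]
    · intro z _ hzne
      have : (z : ℕ) ≠ (x : ℕ) - i := fun hh => hzne (Fin.ext hh)
      split_ifs with h1 h2
      · exfalso; omega
      · exact mul_zero _
      · exact zero_mul _
      · exact zero_mul _
    · simp
  · rw [if_neg h]
    apply Finset.sum_eq_zero
    intro z _
    split_ifs with h1 h2
    · exfalso; omega
    · exact mul_zero _
    · exact zero_mul _
    · exact zero_mul _

lemma EmEmH_Em (n k i : ℕ) : Em n k i * (Em n k i)ᴴ * Em n k i = Em n k i := by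
  rw [EmEmH]
  ext x y
  rw [Matrix.mul_apply]
  simp only [Em_apply, of_apply]
  rw [Finset.sum_eq_single x]
  · by_cases hP : (x : ℕ) < k ∧ i ≤ (x : ℕ)
    · rw [if_pos ⟨rfl, hP⟩, one_mul]
    · rw [if_neg (by tauto), zero_mul]
      split_ifs with h1
      · exfalso; omega
      · rfl
  · intro z _ hzne
    have : (x : ℕ) ≠ (z : ℕ) := fun hh => hzne (Fin.ext hh).symm
    rw [if_neg (by tauto), zero_mul]
  · simp

lemma Em_mulVec_Wv (n k i : ℕ) : Em n k i *ᵥ Wv n k i = 0 := by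
  funext x
  rw [Matrix.mulVec, dotProduct]
  apply Finset.sum_eq_zero
  intro y _
  simp only [Em_apply, Wv]
  by_cases hE : (x : ℕ) < k ∧ (x : ℕ) = (y : ℕ) + i
  · rw [if_pos hE, one_mul, if_neg (by omega), if_neg (by omega)]
  · rw [if_neg hE, zero_mul]

lemma Wv_vecMul_EmH (n k i : ℕ) : Wv n k i ᵥ* (Em n k i)ᴴ = 0 := by
  funext y
  rw [Matrix.vecMul, dotProduct]
  apply Finset.sum_eq_zero
  intro z _
  simp only [EmH_apply, Wv]
  by_cases hE : (y : ℕ) < k ∧ (y : ℕ) = (z : ℕ) + i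
  · rw [if_pos hE, mul_one, if_neg (by omega), if_neg (by omega)]
  · rw [if_neg hE, mul_zero]

lemma dl_vecMul_Em (n k i : ℕ) : dl n k ᵥ* Em n k i = 0 := by
  funext y
  rw [Matrix.vecMul, dotProduct]
  apply Finset.sum_eq_zero
  intro x _
  simp only [Em_apply, dl]
  split_ifs with h1 h2
  · exfalso; omega
  all_goals simp

lemma EmH_mulVec_dl (n k i : ℕ) : (Em n k i)ᴴ *ᵥ dl n k = 0 := by
  funext z
  rw [Matrix.mulVec, dotProduct]
  apply Finset.sum_eq_zero
  intro x _
  simp only [EmH_apply, dl]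
  split_ifs with h1 h2
  · exfalso; omega
  all_goals simp

lemma dl_dot_dl (n k : ℕ) (hkn : k < n) : dl n k ⬝ᵥ dl n k = 1 := by
  rw [dl_dot k hkn]; simp [dl]

/-- `Mm i` is a matrix partial isometry for `1 ≤ i ≤ k` (in fact `0 ≤ i ≤ k`). -/
lemma Mm_pi (n k i : ℕ) (hkn : k < n) (hik : i ≤ k) :
    Mm n k i * (Mm n k i)ᴴ * Mm n k i = Mm n k i := by
  apply abstract_pi
  · exact EmEmH_Em n k i
  · exact Em_mulVec_Wv n k i
  · exact Wv_vecMul_EmH n k i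
  · exact dl_vecMul_Em n k i
  · exact EmH_mulVec_dl n k i
  · exact Sw n k hkn i hik
  · exact dl_dot_dl n k hkn
  · exact star_Wv n k i
  · exact star_dl n k

lemma Em_one_mul_Em (n k i : ℕ) : Em n k 1 * Em n k i = Em n k (i+1) := by
  ext x y
  rw [Matrix.mul_apply]
  simp only [Em_apply]
  by_cases h : (x : ℕ) < k ∧ (x : ℕ) = (y : ℕ) + (i + 1)
  · rw [if_pos h]
    have hz : (y : ℕ) + i < n := by omega
    rw [Finset.sum_eq_single (⟨(y : ℕ) + i, hz⟩ : Fin n)]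
    · rw [if_pos ⟨h.1, by simp only [Fin.val_mk]; omega⟩,
        if_pos ⟨by simp only [Fin.val_mk]; omega, by simp only [Fin.val_mk]⟩, mul_one]
    · intro z _ hzne
      have : (z : ℕ) ≠ (y : ℕ) + i := fun hh => hzne (Fin.ext hh)
      split_ifs with h1 h2
      · exfalso; omega
      · exact mul_zero _
      · exact zero_mul _
      · exact zero_mul _
    · simp
  · rw [if_neg h]
    apply Finset.sum_eq_zero
    intro z _
    split_ifs with h1 h2
    · exfalso; omega
    · exact mul_zero _
    · exact zero_mul _
    · exact zero_mul _

lemma Em_mulVec_dl_k (n k i : ℕ) : Em n k i *ᵥ dl n k = 0 := by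
  funext x
  rw [Matrix.mulVec, dotProduct]
  apply Finset.sum_eq_zero
  intro y _
  simp only [Em_apply, dl]
  by_cases h1 : (y : ℕ) = k
  · rw [if_pos h1, if_neg (by omega), zero_mul]
  · rw [if_neg h1, mul_zero]

lemma Wv_one_vecMul_Em (n k i : ℕ) (hkn : k < n) :
    Wv n k 1 ᵥ* Em n k i = fun y : Fin n => if (y : ℕ) + i + 1 = k then aa else 0 := by
  funext y
  rw [Matrix.vecMul, dotProduct]
  by_cases h : (y : ℕ) + i + 1 = k
  · have hz : (y : ℕ) + i < n := by omega
    rw [if_pos h, Finset.sum_eq_single (⟨(y : ℕ) + i, hz⟩ : Fin n)]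
    · have h1 : Wv n k 1 ⟨(y : ℕ) + i, hz⟩ = aa := by
        show (if (y:ℕ) + i < k ∧ k ≤ (y:ℕ) + i + 1 then aa * cc ^ ((y:ℕ) + i + 1 - k)
          else if (y:ℕ) + i = k then cc ^ 1 else 0) = aa
        rw [if_pos ⟨by omega, by omega⟩, show (y:ℕ) + i + 1 - k = 0 from by omega,
          pow_zero, mul_one]
      have h2 : Em n k i ⟨(y : ℕ) + i, hz⟩ y = 1 := by
        rw [Em_apply]
        exact if_pos ⟨by simpa using by omega, rfl⟩
      rw [h1, h2, mul_one]
    · intro z _ hzne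
      have hne : (z : ℕ) ≠ (y : ℕ) + i := fun hh => hzne (Fin.ext hh)
      rw [Em_apply, if_neg (by omega), mul_zero]
    · simp
  · rw [if_neg h]
    apply Finset.sum_eq_zero
    intro z _
    simp only [Wv, Em_apply]
    by_cases hE : (z : ℕ) < k ∧ (z : ℕ) = (y : ℕ) + i
    · rw [if_pos hE, mul_one, if_neg (by omega), if_neg (by omega)]
    · rw [if_neg hE, mul_zero]

lemma Wv_one_dot_dl (n k : ℕ) (hk : 0 < k) (hkn : k < n) : Wv n k 1 ⬝ᵥ dl n k = cc := by
  rw [dot_dl k hkn]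
  show (if k < k ∧ k ≤ k + 1 then aa * cc ^ (k + 1 - k) else if k = k then cc ^ 1 else 0) = cc
  rw [if_neg (by omega), if_pos rfl, pow_one]

lemma AA_mul_Mm (n k i : ℕ) (hk : 0 < k) (hkn : k < n) :
    Mm n k 1 * Mm n k i = Mm n k (i+1) := by
  show (Em n k 1 + vecMulVec (dl n k) (Wv n k 1)) * (Em n k i + vecMulVec (dl n k) (Wv n k i)) = _
  rw [Matrix.add_mul, Matrix.mul_add, Matrix.mul_add, Em_one_mul_Em,
    _root_.mul_vecMulVec, Em_mulVec_dl_k, _root_.vecMulVec_zero_left,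
    _root_.vecMulVec_mul, Wv_one_vecMul_Em n k i hkn,
    _root_.vecMulVec_mul_vecMulVec, Wv_one_dot_dl n k hk hkn]
  show _ = Em n k (i+1) + vecMulVec (dl n k) (Wv n k (i+1))
  rw [Wv_succ]
  rw [show vecMulVec (dl n k) ((fun y : Fin n => if (y : ℕ) + i + 1 = k then aa else 0) + cc • Wv n k i)
      = vecMulVec (dl n k) (fun y : Fin n => if (y : ℕ) + i + 1 = k then aa else 0)
        + vecMulVec (dl n k) (cc • Wv n k i) from by
    ext a b; simp [vecMulVec_apply, mul_add, mul_left_comm]]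
  rw [_root_.vecMulVec_smul_right]
  abel

lemma pow_AA (n k : ℕ) (hk : 0 < k) (hkn : k < n) :
    ∀ i, 1 ≤ i → Mm n k 1 ^ i = Mm n k i := by
  intro i
  induction i with
  | zero => omega
  | succ i ih =>
    intro _
    by_cases hi : 1 ≤ i
    · rw [pow_succ', ih hi, AA_mul_Mm n k i hk hkn]
    · have : i = 0 := by omega
      subst this
      rw [pow_one]

lemma Em_eq_zero (n k i : ℕ) (h : k ≤ i) : Em n k i = 0 := by
  ext x y
  rw [Em_apply]
  rw [if_neg (by omega)]
  rfl

lemma Mm_succ_k (n k : ℕ) : Mm n k (k+1) = cc • Mm n k k := by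
  show Em n k (k+1) + vecMulVec (dl n k) (Wv n k (k+1))
    = cc • (Em n k k + vecMulVec (dl n k) (Wv n k k))
  rw [Em_eq_zero n k (k+1) (by omega), Em_eq_zero n k k le_rfl, Wv_succ,
    d_eq_zero n k k le_rfl]
  rw [zero_add, zero_add, zero_add, _root_.vecMulVec_smul_right]

lemma Mm_k_ne_zero (n k : ℕ) (hkn : k < n) : Mm n k k ≠ 0 := by
  intro h
  have := congrFun (congrFun (congrArg (fun M : Matrix (Fin n) (Fin n) ℂ => (M : Fin n → Fin n → ℂ)) h) ⟨k, hkn⟩) ⟨k, hkn⟩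
  simp only [Mm, Matrix.add_apply, vecMulVec_apply, Matrix.zero_apply] at this
  rw [Em_apply, if_neg (by omega)] at this
  have hdl : dl n k ⟨k, hkn⟩ = 1 := by simp [dl]
  have hwv : Wv n k k ⟨k, hkn⟩ = cc ^ k := by
    show (if k < k ∧ k ≤ k + k then aa * cc ^ (k + k - k) else if k = k then cc ^ k else 0) = cc ^ k
    rw [if_neg (by omega), if_pos rfl]
  rw [hdl, hwv, zero_add, one_mul] at this
  exact pow_ne_zero k cc_ne_zero this

/-- witness vector for ascent: `v_m = cc^(m+1) • dl (k-1-m) - aa • dl k` -/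
noncomputable def Vm (n k m : ℕ) : Fin n → ℂ :=
  cc ^ (m+1) • dl n (k-1-m) + (-aa) • dl n k

lemma vecMulVec_mulVec {ι : Type*} [Fintype ι] (u w v : ι → ℂ) :
    vecMulVec u w *ᵥ v = (w ⬝ᵥ v) • u := by
  funext x
  simp only [Matrix.mulVec, dotProduct, vecMulVec_apply, Pi.smul_apply, smul_eq_mul,
    Finset.mul_sum]
  rw [Finset.sum_mul]
  exact Finset.sum_congr rfl fun z _ => by ring


lemma Em_mulVec_dl_zero (n k i t : ℕ) (h : k ≤ t + i) : Em n k i *ᵥ dl n t = 0 := by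
  funext x
  rw [Matrix.mulVec, dotProduct]
  apply Finset.sum_eq_zero
  intro y _
  simp only [dl]
  by_cases hy : (y : ℕ) = t
  · rw [if_pos hy, Em_apply, if_neg (by omega), zero_mul]
  · rw [if_neg hy, mul_zero]

lemma Wv_at_high (n k m : ℕ) (hm : m < k) (h1 : k - 1 - m < n) :
    Wv n k (m+1) ⟨k-1-m, h1⟩ = aa := by
  show (if k-1-m < k ∧ k ≤ (k-1-m) + (m+1) then aa * cc ^ ((k-1-m) + (m+1) - k)
    else if k-1-m = k then cc ^ (m+1) else 0) = aa
  rw [if_pos ⟨by omega, by omega⟩, show (k-1-m) + (m+1) - k = 0 from by omega, pow_zero, mul_one]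

lemma Wv_at_k (n k i : ℕ) (hkn : k < n) : Wv n k i ⟨k, hkn⟩ = cc ^ i := by
  show (if k < k ∧ k ≤ k + i then aa * cc ^ (k + i - k) else if k = k then cc ^ i else 0) = cc ^ i
  rw [if_neg (by omega), if_pos rfl]

lemma Wv_dot_Vm (n k m : ℕ) (hm : m < k) (hkn : k < n) :
    Wv n k (m+1) ⬝ᵥ Vm n k m = 0 := by
  have h1 : k - 1 - m < n := by omega
  rw [Vm, dotProduct_add, dotProduct_smul, dotProduct_smul,
    dot_dl _ h1, dot_dl _ hkn, Wv_at_high n k m hm h1, Wv_at_k n k (m+1) hkn]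
  simp only [smul_eq_mul]
  ring

lemma Mm_mulVec_Vm (n k m : ℕ) (hm : m < k) (hkn : k < n) :
    Mm n k (m+1) *ᵥ Vm n k m = 0 := by
  show (Em n k (m+1) + vecMulVec (dl n k) (Wv n k (m+1))) *ᵥ Vm n k m = 0
  rw [Matrix.add_mulVec, _root_.vecMulVec_mulVec, Wv_dot_Vm n k m hm hkn, zero_smul, add_zero]
  rw [Vm, Matrix.mulVec_add, Matrix.mulVec_smul, Matrix.mulVec_smul,
    Em_mulVec_dl_zero n k (m+1) (k-1-m) (by omega), Em_mulVec_dl_zero n k (m+1) k (by omega)]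
  simp

lemma Mm_mulVec_Vm_ne (n k m : ℕ) (hm1 : 1 ≤ m) (hm : m < k) (hkn : k < n) :
    (Mm n k m *ᵥ Vm n k m) ⟨k-1, by omega⟩ = cc ^ (m+1) := by
  have h1 : k - 1 - m < n := by omega
  have hx : (k - 1 : ℕ) < n := by omega
  show ((Em n k m + vecMulVec (dl n k) (Wv n k m)) *ᵥ Vm n k m) ⟨k-1, hx⟩ = cc ^ (m+1)
  rw [Matrix.add_mulVec, _root_.vecMulVec_mulVec]
  simp only [Pi.add_apply, Pi.smul_apply, smul_eq_mul]
  have hdl0 : dl n k ⟨k-1, hx⟩ = 0 := by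
    simp only [dl]
    rw [if_neg (by omega)]
  rw [hdl0, mul_zero, add_zero]
  rw [Vm, Matrix.mulVec_add, Matrix.mulVec_smul, Matrix.mulVec_smul,
    Em_mulVec_dl_zero n k m k (by omega)]
  simp only [Pi.add_apply, Pi.smul_apply, smul_eq_mul, Pi.zero_apply, mul_zero, add_zero]
  have : (Em n k m *ᵥ dl n (k-1-m)) ⟨k-1, hx⟩ = 1 := by
    show (Em n k m ⟨k-1, hx⟩) ⬝ᵥ dl n (k-1-m) = 1
    rw [dot_dl _ h1, Em_apply]
    rw [if_pos (show ((⟨k-1, hx⟩ : Fin n) : ℕ) < k ∧ ((⟨k-1, hx⟩ : Fin n) : ℕ)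
      = ((⟨k-1-m, h1⟩ : Fin n) : ℕ) + m from by simp only [Fin.val_mk]; omega)]
  rw [this, mul_one]

lemma one_pi {ι : Type*} [Fintype ι] [DecidableEq ι] :
    (1 : Matrix ι ι ℂ).IsPartialIsometry :=
  isPartialIsometry_of_conjTranspose 1 (by simp)

lemma pIndex_eq {ι : Type*} [Fintype ι] [DecidableEq ι] (A : Matrix ι ι ℂ) (k : ℕ)
    (h1 : ∀ i ≤ k, (A ^ i).IsPartialIsometry)
    (h2 : ¬ (A ^ (k+1)).IsPartialIsometry) : A.pIndex = (k : ℕ∞) := by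
  apply le_antisymm
  · apply sSup_le
    rintro x ⟨j, hj, rfl⟩
    have hjk : j ≤ k := by
      by_contra hc
      exact h2 (hj (k+1) (by omega))
    exact_mod_cast hjk
  · exact le_sSup ⟨k, h1, rfl⟩

lemma euclid_symm_ne_zero {n : ℕ} (v : Fin n → ℂ) (x : Fin n) (hx : v x ≠ 0) :
    (WithLp.equiv 2 (Fin n → ℂ)).symm v ≠ 0 := by
  intro h
  apply hx
  have := congrFun (congrArg (WithLp.equiv 2 (Fin n → ℂ)) h) x
  simpa using this

lemma toE_symm_eq_zero_iff {n : ℕ} (B : Matrix (Fin n) (Fin n) ℂ) (v : Fin n → ℂ) :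
    Matrix.toEuclideanLin B ((WithLp.equiv 2 (Fin n → ℂ)).symm v) = 0 ↔ B *ᵥ v = 0 := by
  rw [WithLp.equiv_symm_apply, Matrix.toEuclideanLin_apply_piLp_toLp]
  constructor
  · intro h
    have := congrArg (WithLp.equiv 2 (Fin n → ℂ)) h
    simpa using this
  · intro h
    rw [h]
    simp

/-- If `j = k ≤ n - 1`, then there is an `n`-by-`n` complex matrix `A` with `p(A) = j`
and `a(A) = k`. -/
theorem exists_matrix_pIndex_eq_ascent (n : ℕ) (hn : 0 < n) (j k : ℕ)
    (hjk : j = k) (hkn : k ≤ n - 1) :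
    ∃ A : Matrix (Fin n) (Fin n) ℂ, A.pIndex = (j : ℕ∞) ∧ A.ascent = k := by
  rw [hjk]
  rcases Nat.eq_zero_or_pos k with hk0 | hk1
  · -- k = 0 : take A = cc • 1
    subst hk0
    refine ⟨cc • 1, ?_, ?_⟩
    · apply pIndex_eq
      · intro i hi
        have : i = 0 := by omega
        subst this
        rw [pow_zero]
        exact one_pi
      · rw [zero_add, pow_one]
        apply not_isPartialIsometry_smul 1 (by simp)
        · intro h
          have := congrFun (congrFun (congrArg
            (fun M : Matrix (Fin n) (Fin n) ℂ => (M : Fin n → Fin n → ℂ)) h) ⟨0, hn⟩) ⟨0, hn⟩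
          simp at this
        · exact cc_ne_zero
        · rw [norm_cc]; norm_num
    · rw [Matrix.ascent]
      rw [Nat.sInf_eq_zero]
      left
      show LinearMap.ker _ = LinearMap.ker _
      rw [pow_zero, zero_add, pow_one]
      have : Matrix.toEuclideanLin (cc • (1 : Matrix (Fin n) (Fin n) ℂ))
          = cc • Matrix.toEuclideanLin (1 : Matrix (Fin n) (Fin n) ℂ) := map_smul _ _ _
      rw [this, LinearMap.ker_smul _ _ cc_ne_zero]
  · -- k ≥ 1
    have hkn' : k < n := by omega
    set A := Mm n k 1 with hA
    have hpow : ∀ i, 1 ≤ i → A ^ i = Mm n k i := pow_AA n k hk1 hkn'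
    have hsucc : A ^ (k+1) = cc • A ^ k := by
      rw [hpow (k+1) (by omega), hpow k (by omega), Mm_succ_k]
    have hAk : A ^ k = Mm n k k := hpow k (by omega)
    refine ⟨A, ?_, ?_⟩
    · apply pIndex_eq
      · intro i hik
        rcases Nat.eq_zero_or_pos i with h0 | h1
        · subst h0; rw [pow_zero]; exact one_pi
        · rw [hpow i h1]
          exact isPartialIsometry_of_conjTranspose _ (Mm_pi n k i hkn' hik)
      · rw [hsucc, hAk]
        apply not_isPartialIsometry_smul _ (Mm_pi n k k hkn' le_rfl)
          (Mm_k_ne_zero n k hkn') cc cc_ne_zero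
        rw [norm_cc]; norm_num
    · have hkT : LinearMap.ker (Matrix.toEuclideanLin (A ^ k))
          = LinearMap.ker (Matrix.toEuclideanLin (A ^ (k+1))) := by
        rw [hsucc]
        have : Matrix.toEuclideanLin (cc • A ^ k) = cc • Matrix.toEuclideanLin (A ^ k) :=
          map_smul _ _ _
        rw [this, LinearMap.ker_smul _ _ cc_ne_zero]
      have hlow : ∀ m, m < k →
          LinearMap.ker (Matrix.toEuclideanLin (A ^ m))
            ≠ LinearMap.ker (Matrix.toEuclideanLin (A ^ (m+1))) := by
        intro m hm heq
        set x := (WithLp.equiv 2 (Fin n → ℂ)).symm (Vm n k m) with hx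
        have hx1 : x ∈ LinearMap.ker (Matrix.toEuclideanLin (A ^ (m+1))) := by
          rw [LinearMap.mem_ker, hpow (m+1) (by omega), hx,
            toE_symm_eq_zero_iff]
          exact Mm_mulVec_Vm n k m hm hkn'
        rw [← heq, LinearMap.mem_ker] at hx1
        rcases Nat.eq_zero_or_pos m with h0 | h1
        · subst h0
          rw [pow_zero] at hx1
          have hxne : x ≠ 0 := by
            apply euclid_symm_ne_zero (Vm n k 0) ⟨k-1, by omega⟩
            rw [Vm]
            simp only [Pi.add_apply, Pi.smul_apply, smul_eq_mul]
            have h1 : dl n (k-1-0) ⟨k-1, by omega⟩ = 1 := by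
              show (if (k-1 : ℕ) = k-1-0 then (1:ℂ) else 0) = 1
              rw [if_pos (by omega)]
            have h2 : dl n k ⟨k-1, by omega⟩ = 0 := by
              show (if (k-1 : ℕ) = k then (1:ℂ) else 0) = 0
              rw [if_neg (by omega)]
            rw [h1, h2, mul_zero, add_zero, mul_one, pow_one]
            exact cc_ne_zero
          apply hxne
          have : Matrix.toEuclideanLin (1 : Matrix (Fin n) (Fin n) ℂ) x = x := by
            rw [hx, WithLp.equiv_symm_apply, Matrix.toEuclideanLin_apply_piLp_toLp, Matrix.one_mulVec]
          rwa [this] at hx1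
        · rw [hpow m h1, hx, toE_symm_eq_zero_iff] at hx1
          have := congrFun hx1 ⟨k-1, by omega⟩
          rw [Mm_mulVec_Vm_ne n k m h1 hm hkn'] at this
          simp only [Pi.zero_apply] at this
          exact pow_ne_zero _ cc_ne_zero this
      rw [Matrix.ascent]
      apply le_antisymm
      · exact Nat.sInf_le hkT
      · by_contra hc
        push_neg at hc
        have hne : {m : ℕ | LinearMap.ker (Matrix.toEuclideanLin (A ^ m)) =
            LinearMap.ker (Matrix.toEuclideanLin (A ^ (m+1)))}.Nonempty := ⟨k, hkT⟩
        have hmem := Nat.sInf_mem hne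
        exact hlow _ hc hmem

end
end

section
/- Let A be an n-by-n complex matrix with p(A) finite. If p(A) + a(A) > n, then p(A) = a(A). -/
open Matrix

noncomputable section

namespace PPI

open LinearMap Module Submodule

set_option linter.unusedSectionVars false
set_option linter.unusedVariables false
set_option maxHeartbeats 1000000

variable {E : Type*} [NormedAddCommGroup E] [InnerProductSpace ℂ E] [FiniteDimensional ℂ E]

local notation "⟪" x ", " y "⟫" => @inner ℂ _ _ x y

/-- Operator-level partial isometry. -/
def LPI (S : Module.End ℂ E) : Prop := ∀ x ∈ (LinearMap.ker S)ᗮ, ‖S x‖ = ‖x‖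

lemma lpi_one : LPI (1 : Module.End ℂ E) := fun x _ => rfl

lemma lpi_mem_orthogonal {S : Module.End ℂ E} (hS : LPI S) {x : E}
    (hx : ‖S x‖ = ‖x‖) : x ∈ (LinearMap.ker S)ᗮ := by
  set K := LinearMap.ker S with hK
  have hdec : (orthogonalProjection K x : E) + (orthogonalProjection Kᗮ x : E) = x :=
    Submodule.starProjection_add_starProjection_orthogonal (K := K) x
  set u : E := (orthogonalProjection K x : E) with hu
  set v : E := (orthogonalProjection Kᗮ x : E) with hv
  have hSu : S u = 0 := (orthogonalProjection K x).2
  have hvmem : v ∈ Kᗮ := (orthogonalProjection Kᗮ x).2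
  have hSx : S x = S v := by
    conv_lhs => rw [← hdec]
    rw [map_add, hSu, zero_add]
  have hnv : ‖S v‖ = ‖v‖ := hS v hvmem
  have hxv : ‖x‖ = ‖v‖ := by rw [← hx, hSx, hnv]
  have hpyth : ‖x‖ ^ 2 = ‖u‖ ^ 2 + ‖v‖ ^ 2 := by
    have := norm_sq_eq_add_norm_sq_projection x K
    simpa [← hu, ← hv] using this
  have hu0 : u = 0 := by
    have : ‖u‖ ^ 2 = 0 := by rw [hxv] at hpyth; nlinarith [norm_nonneg u]
    simpa using pow_eq_zero_iff (n := 2) (by norm_num) |>.mp this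
  have : x = v := by rw [← hdec, hu0, zero_add]
  rw [this]; exact hvmem

lemma lpi_inner {S : Module.End ℂ E} (hS : LPI S) {x y : E}
    (hx : x ∈ (LinearMap.ker S)ᗮ) (hy : y ∈ (LinearMap.ker S)ᗮ) :
    ⟪S x, S y⟫ = ⟪x, y⟫ := by
  let f : (LinearMap.ker S)ᗮ →ₗᵢ[ℂ] E :=
    ⟨S ∘ₗ (LinearMap.ker S)ᗮ.subtype, fun z => hS z z.2⟩
  have := f.inner_map_map ⟨x, hx⟩ ⟨y, hy⟩
  exact this

lemma ker_pow_le (T : Module.End ℂ E) {i j : ℕ} (h : i ≤ j) :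
    LinearMap.ker (T ^ i) ≤ LinearMap.ker (T ^ j) := by
  obtain ⟨d, rfl⟩ := Nat.exists_eq_add_of_le h
  intro x hx
  have hx' : (T ^ i) x = 0 := hx
  have : (T ^ (i + d)) x = (T ^ d) ((T ^ i) x) := by
    rw [add_comm, pow_add]; rfl
  simp only [LinearMap.mem_ker, this, hx', map_zero]


lemma stepPI {T : Module.End ℂ E} {m : ℕ} (hT : LPI T) (hm : LPI (T ^ m))
    (hker : LinearMap.ker (T ^ (m + 1)) = LinearMap.ker (T ^ m))
    (hran : ∀ y, (T ^ m) y ∈ (LinearMap.ker T)ᗮ) : LPI (T ^ (m + 1)) := by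
  intro x hx
  rw [hker] at hx
  have h1 : (T ^ (m + 1)) x = T ((T ^ m) x) := by rw [pow_succ']; rfl
  rw [h1, hT _ (hran x), hm x hx]

lemma rangeA {T : Module.End ℂ E} {a : ℕ} (hT : LPI T) (hA : LPI (T ^ a))
    (hA1 : LPI (T ^ (a + 1))) (hker : LinearMap.ker (T ^ (a + 1)) = LinearMap.ker (T ^ a)) :
    ∀ z, (T ^ a) z ∈ (LinearMap.ker T)ᗮ := by
  intro z
  set K := LinearMap.ker (T ^ a) with hK
  have hdec : (orthogonalProjection K z : E) + (orthogonalProjection Kᗮ z : E) = z :=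
    Submodule.starProjection_add_starProjection_orthogonal (K := K) z
  set v : E := (orthogonalProjection Kᗮ z : E) with hv
  have hvmem : v ∈ Kᗮ := (orthogonalProjection Kᗮ z).2
  have hTz : (T ^ a) z = (T ^ a) v := by
    conv_lhs => rw [← hdec]
    rw [map_add, (orthogonalProjection K z).2, zero_add]
  have h1 : ‖T ((T ^ a) v)‖ = ‖(T ^ a) v‖ := by
    have e1 : T ((T ^ a) v) = (T ^ (a + 1)) v := by rw [pow_succ']; rfl
    rw [e1, hA1 v (by rw [hker]; exact hvmem), hA v hvmem]
  rw [hTz]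
  exact lpi_mem_orthogonal hT h1

lemma allPI {T : Module.End ℂ E} {a : ℕ} (hPI : ∀ i ≤ a + 1, LPI (T ^ i))
    (ha : LinearMap.ker (T ^ a) = LinearMap.ker (T ^ (a + 1))) : ∀ m, LPI (T ^ m) := by
  have hstab : ∀ m, a ≤ m → LinearMap.ker (T ^ m) = LinearMap.ker (T ^ a) := by
    intro m hm
    obtain ⟨d, rfl⟩ := Nat.exists_eq_add_of_le hm
    exact (Module.End.ker_pow_constant ha d).symm
  have hT : LPI T := by have := hPI 1 (by omega); rwa [pow_one] at this
  have hran : ∀ z, (T ^ a) z ∈ (LinearMap.ker T)ᗮ :=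
    rangeA hT (hPI a (by omega)) (hPI (a + 1) le_rfl) (hstab (a + 1) (by omega))
  have key : ∀ d, LPI (T ^ (a + d)) := by
    intro d
    induction d with
    | zero => exact hPI a (by omega)
    | succ d ih =>
      have hr : ∀ y, (T ^ (a + d)) y ∈ (LinearMap.ker T)ᗮ := by
        intro y
        have e : (T ^ (a + d)) y = (T ^ a) ((T ^ d) y) := by rw [pow_add]; rfl
        rw [e]; exact hran _
      have hk : LinearMap.ker (T ^ (a + d + 1)) = LinearMap.ker (T ^ (a + d)) := by
        exact (hstab _ (by omega)).trans (hstab _ (by omega)).symm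
      exact stepPI hT ih hk hr
  intro m
  rcases le_or_gt a m with hm | hm
  · obtain ⟨d, rfl⟩ := Nat.exists_eq_add_of_le hm; exact key d
  · exact hPI m (by omega)


lemma forced {T : Module.End ℂ E} {m : ℕ} (hPI : ∀ i ≤ m + 1, LPI (T ^ i))
    {w : E} (hw1 : w ∈ LinearMap.ker (T ^ (m + 2))) (hw2 : w ∈ (LinearMap.ker (T ^ (m + 1)))ᗮ)
    (hwn : ‖w‖ = 1)
    (hdim : Module.finrank ℂ
      (LinearMap.ker (T ^ (m + 1)) ⊓ (LinearMap.ker (T ^ m))ᗮ : Submodule ℂ E) ≤ 1) :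
    LPI (T ^ (m + 2)) := by
  have hT : LPI T := by have := hPI 1 (by omega); rwa [pow_one] at this
  have hwT : w ∈ (LinearMap.ker T)ᗮ := by
    have h1 := Submodule.orthogonal_le (ker_pow_le T (show 1 ≤ m + 1 by omega)) hw2
    rwa [pow_one] at h1
  -- T w lands in the "top slice" M
  have hTw_ker : T w ∈ LinearMap.ker (T ^ (m + 1)) := by
    rw [LinearMap.mem_ker]
    have e : (T ^ (m + 1)) (T w) = (T ^ (m + 2)) w := by rw [pow_succ]; rfl
    rw [e]; exact hw1
  have hTw_norm : ‖T w‖ = 1 := by rw [hT w hwT, hwn]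
  have hTw_orth : T w ∈ (LinearMap.ker (T ^ m))ᗮ := by
    apply lpi_mem_orthogonal (hPI m (by omega))
    have e : (T ^ m) (T w) = (T ^ (m + 1)) w := by rw [pow_succ]; rfl
    rw [e, hPI (m + 1) le_rfl w hw2, hwn, hTw_norm]
  have hTw_ne : T w ≠ 0 := by intro h; rw [h, norm_zero] at hTw_norm; norm_num at hTw_norm
  set M : Submodule ℂ E := LinearMap.ker (T ^ (m + 1)) ⊓ (LinearMap.ker (T ^ m))ᗮ with hM
  have hTwM : T w ∈ M := ⟨hTw_ker, hTw_orth⟩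
  have hspan : ∀ z ∈ M, ∃ c : ℂ, z = c • (T w) := by
    have hle : (ℂ ∙ (T w)) ≤ M := (Submodule.span_singleton_le_iff_mem _ _).mpr hTwM
    have hfr : Module.finrank ℂ (ℂ ∙ (T w)) = 1 := finrank_span_singleton hTw_ne
    have heq : (ℂ ∙ (T w)) = M := Submodule.eq_of_le_of_finrank_le hle (by rw [hfr]; exact hdim)
    intro z hz
    rw [← heq] at hz
    obtain ⟨c, hc⟩ := Submodule.mem_span_singleton.mp hz
    exact ⟨c, hc.symm⟩
  -- main verification
  intro x hx
  have hxk : x ∈ (LinearMap.ker (T ^ (m + 1)))ᗮ :=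
    Submodule.orthogonal_le (ker_pow_le T (by omega)) hx
  have hxT : x ∈ (LinearMap.ker T)ᗮ := by
    have h1 := Submodule.orthogonal_le (ker_pow_le T (show 1 ≤ m + 2 by omega)) hx
    rwa [pow_one] at h1
  have hnorm1 : ‖(T ^ (m + 1)) x‖ = ‖x‖ := hPI (m + 1) le_rfl x hxk
  -- decompose y = T x
  set y : E := T x with hy
  set K : Submodule ℂ E := LinearMap.ker (T ^ (m + 1)) with hK
  have hdec : (orthogonalProjection K y : E) + (orthogonalProjection Kᗮ y : E) = y :=
    Submodule.starProjection_add_starProjection_orthogonal (K := K) y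
  set p : E := (orthogonalProjection K y : E) with hp
  set q : E := (orthogonalProjection Kᗮ y : E) with hq
  have hpK : p ∈ K := (orthogonalProjection K y).2
  have hqK : q ∈ Kᗮ := (orthogonalProjection Kᗮ y).2
  -- q part
  have hq1 : (T ^ m) q ∈ (LinearMap.ker T)ᗮ := by
    apply lpi_mem_orthogonal hT
    have e : T ((T ^ m) q) = (T ^ (m + 1)) q := by rw [pow_succ']; rfl
    rw [e, hPI (m + 1) le_rfl q hqK, hPI m (by omega) q
      (Submodule.orthogonal_le (ker_pow_le T (by omega)) hqK)]
  -- p part : p ∈ ker (T ^ m)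
  have hp0 : (T ^ m) p = 0 := by
    set K' : Submodule ℂ E := LinearMap.ker (T ^ m) with hK'
    have hdec' : (orthogonalProjection K' p : E) + (orthogonalProjection K'ᗮ p : E) = p :=
      Submodule.starProjection_add_starProjection_orthogonal (K := K') p
    set p1 : E := (orthogonalProjection K' p : E) with hp1
    set p2 : E := (orthogonalProjection K'ᗮ p : E) with hp2
    have hp1K' : p1 ∈ K' := (orthogonalProjection K' p).2
    have hp2o : p2 ∈ K'ᗮ := (orthogonalProjection K'ᗮ p).2
    have hp2K : p2 ∈ K := by
      have : p2 = p - p1 := by rw [← hdec']; abel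
      rw [this]
      exact K.sub_mem hpK (ker_pow_le T (show m ≤ m + 1 by omega) hp1K')
    obtain ⟨c, hc⟩ := hspan p2 ⟨hp2K, hp2o⟩
    -- inner products with T w
    have hyTw : ⟪T w, y⟫ = 0 := by
      rw [hy, lpi_inner hT hwT hxT]
      exact Submodule.inner_right_of_mem_orthogonal hw1 hx
    have hiTwp1 : ⟪T w, p1⟫ = 0 := by
      have := Submodule.inner_right_of_mem_orthogonal hp1K' hTw_orth
      rw [← inner_conj_symm, this, map_zero]
    have hiTwq : ⟪T w, q⟫ = 0 := Submodule.inner_right_of_mem_orthogonal hTw_ker hqK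
    have hiTwp2 : ⟪T w, p2⟫ = 0 := by
      have hsum : ⟪T w, p1⟫ + ⟪T w, p2⟫ + ⟪T w, q⟫ = ⟪T w, y⟫ := by
        rw [← inner_add_right, ← inner_add_right, hdec', hdec]
      rw [hyTw, hiTwp1, hiTwq] at hsum
      linear_combination hsum
    have hc0 : c = 0 := by
      rw [hc, inner_smul_right] at hiTwp2
      have hTw2 : ⟪T w, T w⟫ = 1 := by
        rw [inner_self_eq_norm_sq_to_K, hTw_norm]; norm_num
      rw [hTw2, mul_one] at hiTwp2
      exact hiTwp2
    have hpK' : p ∈ K' := by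
      rw [← hdec', hc, hc0, zero_smul, add_zero]; exact hp1K'
    exact hpK'
  -- assemble
  have hTm1x : (T ^ (m + 1)) x = (T ^ m) q := by
    have e : (T ^ (m + 1)) x = (T ^ m) y := by rw [pow_succ]; rfl
    rw [e, ← hdec, map_add, hp0, zero_add]
  have hfinal : (T ^ (m + 1)) x ∈ (LinearMap.ker T)ᗮ := by rw [hTm1x]; exact hq1
  have e2 : (T ^ (m + 2)) x = T ((T ^ (m + 1)) x) := by rw [pow_succ']; rfl
  rw [e2, hT _ hfinal, hnorm1]


/-- `Dd T j` is `dim ker T^{j+1} - dim ker T^j`. -/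
def Dd (T : Module.End ℂ E) (j : ℕ) : ℕ :=
  Module.finrank ℂ (LinearMap.ker (T ^ (j + 1)) ⊓ (LinearMap.ker (T ^ j))ᗮ : Submodule ℂ E)

lemma d_sum (T : Module.End ℂ E) (j : ℕ) :
    Module.finrank ℂ (LinearMap.ker (T ^ (j + 1)) : Submodule ℂ E) =
      Module.finrank ℂ (LinearMap.ker (T ^ j) : Submodule ℂ E) + Dd T j := by
  have h := Submodule.finrank_add_inf_finrank_orthogonal
    (ker_pow_le T (show j ≤ j + 1 by omega))
  rw [← h, Dd, inf_comm]

lemma d_mono (T : Module.End ℂ E) (j : ℕ) : Dd T (j + 1) ≤ Dd T j := by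
  set M1 : Submodule ℂ E := LinearMap.ker (T ^ (j + 1)) ⊓ (LinearMap.ker (T ^ j))ᗮ with hM1
  set M2 : Submodule ℂ E := LinearMap.ker (T ^ (j + 2)) ⊓ (LinearMap.ker (T ^ (j + 1)))ᗮ with hM2
  let φ : M2 →ₗ[ℂ] M1 :=
    (orthogonalProjection M1).toLinearMap ∘ₗ ((T : E →ₗ[ℂ] E) ∘ₗ M2.subtype)
  have hinj : Function.Injective φ := by
    rw [← LinearMap.ker_eq_bot, Submodule.eq_bot_iff]
    rintro z hz
    have hzM2 : (z : E) ∈ M2 := z.2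
    set x : E := (z : E) with hx
    set y : E := T x with hy
    have hyK : y ∈ LinearMap.ker (T ^ (j + 1)) := by
      rw [LinearMap.mem_ker]
      have e : (T ^ (j + 1)) y = (T ^ (j + 2)) x := by rw [hy, pow_succ]; rfl
      rw [e]; exact hzM2.1
    set a : E := (orthogonalProjection (LinearMap.ker (T ^ j)) y : E) with ha
    have haK : a ∈ LinearMap.ker (T ^ j) := (orthogonalProjection _ y).2
    set b : E := y - a with hb
    have hbo : b ∈ (LinearMap.ker (T ^ j))ᗮ := Submodule.sub_starProjection_mem_orthogonal y
    have hbK : b ∈ LinearMap.ker (T ^ (j + 1)) := by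
      rw [hb]
      exact Submodule.sub_mem _ hyK (ker_pow_le T (show j ≤ j + 1 by omega) haK)
    have hbM1 : b ∈ M1 := ⟨hbK, hbo⟩
    have haorth : a ∈ M1ᗮ := by
      rw [Submodule.mem_orthogonal]
      intro u hu
      have := Submodule.inner_right_of_mem_orthogonal haK hu.2
      rw [← inner_conj_symm, this, map_zero]
    have hφz : (φ z : E) = (orthogonalProjection M1 y : E) := rfl
    have hproj : orthogonalProjection M1 y = ⟨b, hbM1⟩ := by
      have e1 : y = a + b := by rw [hb]; abel
      rw [e1, map_add,
        Submodule.orthogonalProjectionOnto_apply_of_mem_orthogonal haorth,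
        orthogonalProjection_mem_subspace_eq_self ⟨b, hbM1⟩, zero_add]
    have hb0 : b = 0 := by
      have : (φ z : E) = b := by rw [hφz, hproj]
      rw [LinearMap.mem_ker] at hz
      rw [hz] at this
      exact (by simpa using this.symm)
    have hyK' : y ∈ LinearMap.ker (T ^ j) := by
      have : y = a := by rw [← sub_eq_zero, ← hb, hb0]
      rw [this]; exact haK
    have hxker : x ∈ LinearMap.ker (T ^ (j + 1)) := by
      rw [LinearMap.mem_ker]
      have e : (T ^ (j + 1)) x = (T ^ j) y := by rw [hy, pow_succ]; rfl
      rw [e]; exact hyK'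
    have : x = 0 := by
      have hd := Submodule.orthogonal_disjoint (LinearMap.ker (T ^ (j + 1)))
      exact (Submodule.disjoint_def.mp hd) x hxker hzM2.2
    exact Subtype.ext this
  exact LinearMap.finrank_le_finrank_of_injective hinj

lemma d_antitone (T : Module.End ℂ E) {i j : ℕ} (h : i ≤ j) : Dd T j ≤ Dd T i := by
  induction j with
  | zero => simp_all
  | succ j ih =>
    rcases Nat.lt_or_ge i (j + 1) with hc | hc
    · exact (d_mono T j).trans (ih (by omega))
    · have : i = j + 1 := by omega
      rw [this]

lemma d_pos {T : Module.End ℂ E} {j : ℕ}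
    (hne : LinearMap.ker (T ^ j) ≠ LinearMap.ker (T ^ (j + 1))) : 1 ≤ Dd T j := by
  by_contra hle
  have h0 : Dd T j = 0 := by omega
  have := d_sum T j
  rw [h0, add_zero] at this
  exact hne (Submodule.eq_of_le_of_finrank_le (ker_pow_le T (by omega)) this.le)

lemma d_total {T : Module.End ℂ E} {a k : ℕ} (hka : k ≤ a)
    (hne : ∀ j < a, LinearMap.ker (T ^ j) ≠ LinearMap.ker (T ^ (j + 1)))
    (hD2 : ∀ j, j + 1 ≤ k → 2 ≤ Dd T j) :
    a + k ≤ Module.finrank ℂ (LinearMap.ker (T ^ a) : Submodule ℂ E) := by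
  suffices H : ∀ j, j ≤ a → j + min j k ≤ Module.finrank ℂ (LinearMap.ker (T ^ j) : Submodule ℂ E) by
    have := H a le_rfl
    rw [min_eq_right hka] at this
    omega
  intro j
  induction j with
  | zero => simp
  | succ j ih =>
    intro hja
    have h1 := ih (by omega)
    have h2 := d_sum T j
    rcases le_or_gt (j + 1) k with hc | hc
    · have h3 := hD2 j hc
      have hmin1 : min j k = j := by omega
      have hmin2 : min (j + 1) k = j + 1 := by omega
      omega
    · have h3 := d_pos (hne j (by omega))
      have hmin1 : min j k = min (j + 1) k := by omega
      omega


end PPI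

section glue

set_option linter.unusedSectionVars false
set_option linter.unusedVariables false
set_option maxHeartbeats 1000000

variable {n : ℕ}

lemma toEuclideanLin_pow (A : Matrix (Fin n) (Fin n) ℂ) (i : ℕ) :
    Matrix.toEuclideanLin (A ^ i) = (Matrix.toEuclideanLin A) ^ i := by
  induction i with
  | zero =>
    rw [pow_zero, pow_zero, Matrix.toEuclideanLin_eq_toLin, Matrix.toLin_one]
    rfl
  | succ i ih =>
    rw [pow_succ, pow_succ, Matrix.toEuclideanLin_eq_toLin, Matrix.toLin_mul _ (PiLp.basisFun 2 ℂ (Fin n)) _,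
      ← Matrix.toEuclideanLin_eq_toLin, ih]
    rfl

lemma isPartialIsometry_iff_lpi (A : Matrix (Fin n) (Fin n) ℂ) (i : ℕ) :
    (A ^ i).IsPartialIsometry ↔ PPI.LPI ((Matrix.toEuclideanLin A) ^ i) := by
  unfold Matrix.IsPartialIsometry PPI.LPI
  rw [toEuclideanLin_pow]


end glue

set_option maxHeartbeats 1000000 in
/-- **Lemma 3.3 (a).** If `A` is an `n`-by-`n` complex matrix with `p(A)` finite and
`p(A) + a(A) > n`, then `p(A) = a(A)`. -/
theorem pIndex_eq_ascent_of_add_gt (n : ℕ) (A : Matrix (Fin n) (Fin n) ℂ)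
    (hfin : A.pIndex ≠ ⊤) (h : (n : ℕ∞) < A.pIndex + (A.ascent : ℕ∞)) :
    A.pIndex = (A.ascent : ℕ∞) := by
  set T : Module.End ℂ (EuclideanSpace ℂ (Fin n)) := Matrix.toEuclideanLin A with hTdef
  set SN : Set ℕ := {j | ∀ i ≤ j, PPI.LPI (T ^ i)} with hSN
  have hset : {j : ℕ | ∀ i ≤ j, (A ^ i).IsPartialIsometry} = SN := by
    ext j
    exact forall₂_congr fun i _ => isPartialIsometry_iff_lpi A i
  have hpIdx : A.pIndex = sSup ((↑) '' SN) := by unfold Matrix.pIndex; rw [hset]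
  set R : Set ℕ := {k | LinearMap.ker (T ^ k) = LinearMap.ker (T ^ (k + 1))} with hR
  have hasc : A.ascent = sInf R := by
    have hsetR : {k : ℕ | LinearMap.ker (Matrix.toEuclideanLin (A ^ k)) =
        LinearMap.ker (Matrix.toEuclideanLin (A ^ (k + 1)))} = R := by
      ext j
      rw [Set.mem_setOf_eq, toEuclideanLin_pow, toEuclideanLin_pow, hR, Set.mem_setOf_eq, hTdef]
    unfold Matrix.ascent
    rw [hsetR]
  have hRne : R.Nonempty :=
    ⟨Module.finrank ℂ (EuclideanSpace ℂ (Fin n)),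
      (Module.End.ker_pow_eq_ker_pow_finrank_of_le (Nat.le_succ _)).symm⟩
  have haR : A.ascent ∈ R := hasc ▸ Nat.sInf_mem hRne
  have hlt : ∀ j < A.ascent, LinearMap.ker (T ^ j) ≠ LinearMap.ker (T ^ (j + 1)) := by
    intro j hj hj2
    have h2 : sInf R ≤ j := Nat.sInf_le hj2
    rw [hasc] at hj
    omega
  have h0SN : 0 ∈ SN := by
    intro i hi
    have hi0 : i = 0 := by omega
    subst hi0
    rw [pow_zero]
    exact fun x _ => rfl
  by_cases hall : ∀ j, j ∈ SN
  · exfalso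
    apply hfin
    rw [hpIdx, sSup_eq_top]
    intro b hb
    lift b to ℕ using hb.ne
    exact ⟨((b + 1 : ℕ) : ℕ∞), ⟨b + 1, hall _, rfl⟩, by exact_mod_cast Nat.lt_succ_self b⟩
  · push_neg at hall
    obtain ⟨mm, hmm⟩ := hall
    have hCne : {m | m ∉ SN}.Nonempty := ⟨mm, hmm⟩
    set m0 := sInf {m | m ∉ SN} with hm0def
    have hm0 : m0 ∉ SN := Nat.sInf_mem hCne
    have hm0pos : 1 ≤ m0 := by
      rcases Nat.eq_zero_or_pos m0 with h0 | h1
      · exact absurd (h0 ▸ h0SN) hm0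
      · exact h1
    obtain ⟨k, hm0k⟩ : ∃ k, m0 = k + 1 := ⟨m0 - 1, by omega⟩
    have hkS : k ∈ SN := by
      by_contra hk
      have := Nat.sInf_le (show k ∈ {m | m ∉ SN} from hk)
      omega
    have hk1 : (k + 1) ∉ SN := by
      rw [← hm0k]; exact hm0
    have hbound : ∀ j ∈ SN, j ≤ k := by
      intro j hj
      by_contra hjk
      push_neg at hjk
      exact hk1 (fun i hi => hj i (le_trans hi hjk))
    have hpk : A.pIndex = (k : ℕ∞) := by
      rw [hpIdx]
      apply le_antisymm
      · apply sSup_le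
        rintro b ⟨j, hj, rfl⟩
        exact_mod_cast hbound j hj
      · exact le_sSup ⟨k, hkS, rfl⟩
    have hn : n < k + A.ascent := by
      rw [hpk] at h
      exact_mod_cast h
    rw [hpk]
    rcases lt_trichotomy k A.ascent with hka | hka | hka
    · exfalso
      have hD2 : ∀ j, j + 1 ≤ k → 2 ≤ PPI.Dd T j := by
        intro j hj
        obtain ⟨m1, hm1⟩ : ∃ m1, k = m1 + 1 := ⟨k - 1, by omega⟩
        subst hm1
        have h2 : 2 ≤ PPI.Dd T m1 := by
          by_contra hlt2
          push_neg at hlt2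
          have h1 : 1 ≤ PPI.Dd T (m1 + 1) := PPI.d_pos (hlt (m1 + 1) hka)
          have hMne : (LinearMap.ker (T ^ (m1 + 2)) ⊓ (LinearMap.ker (T ^ (m1 + 1)))ᗮ :
              Submodule ℂ (EuclideanSpace ℂ (Fin n))) ≠ ⊥ := by
            intro hbot
            have hz : PPI.Dd T (m1 + 1) = 0 := by
              rw [PPI.Dd]
              rw [show m1 + 1 + 1 = m1 + 2 from rfl, hbot]
              exact finrank_bot ℂ _
            omega
          obtain ⟨z, hzM, hz0⟩ := Submodule.exists_mem_ne_zero_of_ne_bot hMne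
          set w := (‖z‖⁻¹ : ℂ) • z with hw
          have hwn : ‖w‖ = 1 := norm_smul_inv_norm hz0
          have hw1 : w ∈ LinearMap.ker (T ^ (m1 + 2)) := Submodule.smul_mem _ _ hzM.1
          have hw2 : w ∈ (LinearMap.ker (T ^ (m1 + 1)))ᗮ := Submodule.smul_mem _ _ hzM.2
          have hPIk : ∀ i ≤ m1 + 1, PPI.LPI (T ^ i) := by
            intro i hi
            exact hkS i (by omega)
          have hforced := PPI.forced (m := m1) hPIk hw1 hw2 hwn (by unfold PPI.Dd at hlt2; omega : Module.finrank ℂ (LinearMap.ker (T ^ (m1 + 1)) ⊓ (LinearMap.ker (T ^ m1))ᗮ : Submodule ℂ (EuclideanSpace ℂ (Fin n))) ≤ 1)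
          apply hk1
          intro i hi
          rcases Nat.lt_or_ge i (m1 + 2) with hik | hik
          · exact hkS i (by omega)
          · have hieq : i = m1 + 2 := by omega
            subst hieq
            exact hforced
        exact le_trans h2 (PPI.d_antitone T (show j ≤ m1 by omega))
      have htot := PPI.d_total (le_of_lt hka) hlt hD2
      have hfr : Module.finrank ℂ (LinearMap.ker (T ^ A.ascent) :
          Submodule ℂ (EuclideanSpace ℂ (Fin n))) ≤ n := by
        have h1 := Submodule.finrank_le (LinearMap.ker (T ^ A.ascent))
        rwa [finrank_euclideanSpace_fin] at h1
      omega
    · exact_mod_cast hka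
    · exfalso
      have hallpi := PPI.allPI (T := T) (a := A.ascent) (fun i hi => hkS i (by omega))
        (by exact haR)
      exact hk1 (fun i _ => hallpi i)
end
end
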